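/- In a bipartite graph G with a partial matching M, if x and y are adjacent vertices such that there exist simple alternating paths P_x from an unmatched vertex x₀ to x and P_y from an unmatched vertex y₀ to y, both of even length and both ending in matched edges (when of positive length), then x₀ ≠ y₀ and there exists an augmenting chain (a simple alternating path between two unmatched vertices) in G. -/

import Mathlib

/-- A walk is alternating with respect to a matching `M` if its edges alternate
between belonging to `M` and not. -/
def SimpleGraph.Walk.IsAlternating {V : Type*} {G : SimpleGraph V}
    (M : G.Subgraph) {u v : V} (p : G.Walk u v) : Prop :=
  List.Chain' (fun e f => (e ∈ M.edgeSet ↔ f ∉ M.edgeSet)) p.edges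


open SimpleGraph


lemma listAlt {α : Type*} {S : Set α} {l : List α}
    (hc : List.Chain' (fun e f => (e ∈ S ↔ f ∉ S)) l)
    (h0 : ∀ e ∈ l.head?, e ∉ S) :
    ∀ i (h : i < l.length), (l.get ⟨i, h⟩ ∈ S ↔ Odd i) := by
  intro i
  induction i with
  | zero =>
    intro h
    cases l with
    | nil => simp at h
    | cons a t =>
      simp only [List.get]
      constructor
      · intro hS; exact absurd hS (h0 a rfl)
      · intro hodd; exact absurd hodd (by simp [Nat.odd_iff])
  | succ j ih =>
    intro h
    have hj : j < l.length := by omega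
    have hrel := (List.isChain_iff_getElem.mp hc) j (by omega)
    have hthis := ih hj
    have hpar : Odd (j + 1) ↔ ¬ Odd j := by
      simp [Nat.odd_iff]; omega
    have he : l.get ⟨j, by omega⟩ = l.get ⟨j, hj⟩ := rfl
    have hrel' : l.get ⟨j, hj⟩ ∈ S ↔ l.get ⟨j + 1, h⟩ ∉ S := hrel
    tauto

lemma walk_head_not_mem {V : Type*} {G : SimpleGraph V} {M : G.Subgraph} {u v : V}
    {p : G.Walk u v} (hu : u ∉ M.verts) :
    ∀ e ∈ p.edges.head?, e ∉ M.edgeSet := by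
  cases p with
  | nil => simp
  | cons h q =>
    intro e he hmem
    simp only [Walk.edges_cons, List.head?_cons, Option.mem_some_iff] at he
    subst he
    rw [Subgraph.mem_edgeSet] at hmem
    exact hu (M.edge_vert hmem)

lemma alt_get {V : Type*} {G : SimpleGraph V} {M : G.Subgraph} {u v : V}
    {p : G.Walk u v} (hp : p.IsAlternating M) (hu : u ∉ M.verts)
    (i : ℕ) (h : i < p.edges.length) :
    (p.edges.get ⟨i, h⟩ ∈ M.edgeSet ↔ Odd i) :=
  listAlt hp (walk_head_not_mem hu) i h

lemma alt_last {V : Type*} {G : SimpleGraph V} {M : G.Subgraph} {u v : V}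
    {p : G.Walk u v} (hp : p.IsAlternating M) (hu : u ∉ M.verts)
    (hev : Even p.length) :
    ∀ e ∈ p.edges.getLast?, e ∈ M.edgeSet := by
  intro e he
  cases hl : p.edges with
  | nil => rw [hl] at he; simp at he
  | cons a t =>
    have hne : p.edges ≠ [] := by rw [hl]; simp
    rw [List.getLast?_eq_getLast hne, Option.mem_some_iff] at he
    subst he
    rw [List.getLast_eq_getElem, show p.edges[p.edges.length - 1]'(by rw [hl]; simp) = p.edges.get ⟨p.edges.length - 1, by rw [hl]; simp⟩ from rfl]
    rw [alt_get hp hu]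
    have hlen : p.edges.length = p.length := p.length_edges
    have hpos : 0 < p.length := by
      have := p.length_edges
      rw [hl] at this; simp at this; omega
    rw [hlen]
    rcases hev with ⟨k, hk⟩
    refine ⟨k - 1, by omega⟩

lemma colorParity {V : Type*} {G : SimpleGraph V} (c : G.Coloring (Fin 2)) {u v : V}
    (p : G.Walk u v) : (c u = c v ↔ Even p.length) := by
  induction p with
  | nil => simp
  | @cons a b w h q ih =>
    have hne : c a ≠ c b := c.valid h
    have key : ∀ s t r : Fin 2, s ≠ t → (s = r ↔ ¬ (t = r)) := by decide
    rw [Walk.length_cons, Nat.even_add_one, ← ih, key _ _ _ hne]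

lemma altIff {V : Type*} {G : SimpleGraph V} {M : G.Subgraph} {e f : Sym2 V}
    (h : e ∈ M.edgeSet ↔ f ∉ M.edgeSet) : (f ∈ M.edgeSet ↔ e ∉ M.edgeSet) := by tauto

lemma base_case {V : Type*} {G : SimpleGraph V} {M : G.Subgraph} (hM : M.IsMatching)
    {x y x₀ y₀ : V} (hxy : G.Adj x y)
    (hx₀ : x₀ ∉ M.verts) (hy₀ : y₀ ∉ M.verts) (hne : x₀ ≠ y₀)
    (px : G.Walk x₀ x) (py : G.Walk y₀ y)
    (hpx : px.IsPath) (hpy : py.IsPath)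
    (hax : px.IsAlternating M) (hay : py.IsAlternating M)
    (hlastx : ∀ e ∈ px.edges.getLast?, e ∈ M.edgeSet)
    (hlasty : ∀ e ∈ py.edges.getLast?, e ∈ M.edgeSet)
    (hdisj : ∀ z, z ∈ px.support → z ∈ py.support → False) :
    ∃ (u w : V) (q : G.Walk u w), u ≠ w ∧ u ∉ M.verts ∧
      w ∉ M.verts ∧ q.IsPath ∧ q.IsAlternating M := by
  -- the edge xy is not in M
  have hexy : s(x, y) ∉ M.edgeSet := by
    intro hmem
    rw [Subgraph.mem_edgeSet] at hmem
    cases px with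
    | nil => exact hx₀ (M.edge_vert hmem)
    | cons h q =>
      obtain ⟨w', q', h', heq⟩ := Walk.exists_cons_eq_concat h q
      have hlast : s(w', x) ∈ M.edgeSet := by
        apply hlastx
        rw [heq, Walk.edges_concat]
        simp
      rw [Subgraph.mem_edgeSet] at hlast
      obtain ⟨t, _, huniq⟩ := hM (M.edge_vert hmem)
      have h1 : w' = y := by
        rw [huniq w' hlast.symm, huniq y hmem]
      have hw' : w' ∈ (Walk.cons h q).support := by
        rw [heq, Walk.support_concat]
        simp [q'.end_mem_support]
      exact hdisj y (h1 ▸ hw') py.end_mem_support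
  refine ⟨x₀, y₀, px.append (Walk.cons hxy py.reverse), hne, hx₀, hy₀, ?_, ?_⟩
  · rw [Walk.isPath_def, Walk.support_append, Walk.support_cons, List.tail_cons,
      Walk.support_reverse]
    refine List.Nodup.append hpx.support_nodup (List.nodup_reverse.mpr hpy.support_nodup) ?_
    intro a ha hb
    exact hdisj a ha (by simpa using hb)
  · show List.Chain' _ _
    rw [Walk.edges_append, Walk.edges_cons, Walk.edges_reverse]
    rw [List.Chain', List.isChain_append]
    refine ⟨hax, ?_, ?_⟩
    · rw [List.isChain_cons]
      constructor
      · intro f hf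
        rw [List.head?_reverse] at hf
        have := hlasty f hf
        simp only [hexy, this]
        tauto
      · rw [List.isChain_reverse]
        exact List.IsChain.imp (fun e f h => altIff h) hay
    · intro a ha b hb
      simp only [List.head?_cons, Option.mem_some_iff] at hb
      subst hb
      have := hlastx a ha
      tauto

lemma step {V : Type*} {G : SimpleGraph V} [DecidableEq V] {M : G.Subgraph}
    {x y x₀ y₀ z : V}
    (px : G.Walk x₀ x) (py : G.Walk y₀ y)
    (hpx : px.IsPath) (hpy : py.IsPath)
    (hax : px.IsAlternating M) (hay : py.IsAlternating M)
    (hzx : z ∈ px.support) (hzy : z ∈ py.support)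
    (hEx : Even (px.takeUntil z hzx).length)
    (hOy : Odd (py.takeUntil z hzy).length) :
    ∃ (x' y' : V) (_ : G.Adj x' y') (px' : G.Walk x₀ x') (py' : G.Walk y₀ y'),
      px'.length + py'.length + 1 ≤ px.length + py.length ∧ px'.IsPath ∧ py'.IsPath ∧
      px'.IsAlternating M ∧ py'.IsAlternating M ∧ Even px'.length ∧ Even py'.length := by
  set px1 := px.takeUntil z hzx with hpx1
  set py1 := py.takeUntil z hzy with hpy1
  have hedx : px.edges = px1.edges ++ (px.dropUntil z hzx).edges := by
    conv_lhs => rw [← px.take_spec hzx]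
    rw [Walk.edges_append]
  have hedy : py.edges = py1.edges ++ (py.dropUntil z hzy).edges := by
    conv_lhs => rw [← py.take_spec hzy]
    rw [Walk.edges_append]
  have hax1 : px1.IsAlternating M := by
    have h := hax
    unfold SimpleGraph.Walk.IsAlternating at h ⊢
    rw [hedx, List.Chain', List.isChain_append] at h
    exact h.1
  have hay1 : py1.IsAlternating M := by
    have h := hay
    unfold SimpleGraph.Walk.IsAlternating at h ⊢
    rw [hedy, List.Chain', List.isChain_append] at h
    exact h.1
  have hpy1path : py1.IsPath := hpy.takeUntil hzy
  have hpx1path : px1.IsPath := hpx.takeUntil hzx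
  cases hc : py1 with
  | nil =>
    exfalso
    have : py1.length = 0 := by rw [hc]; rfl
    rw [this] at hOy
    simp [Nat.odd_iff] at hOy
  | cons h q =>
    obtain ⟨w', q', h', heq⟩ := Walk.exists_cons_eq_concat h q
    have hdecomp : py1 = q'.concat h' := by rw [hc, heq]
    refine ⟨z, w', h'.symm, px1, q', ?_, hpx1path, ?_, hax1, ?_, hEx, ?_⟩
    · have h1 : px1.length ≤ px.length := px.length_takeUntil_le hzx
      have h2 : py1.length ≤ py.length := py.length_takeUntil_le hzy
      have h3 : py1.length = q'.length + 1 := by rw [hdecomp, Walk.length_concat]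
      omega
    · have := hdecomp ▸ hpy1path
      rw [Walk.concat_eq_append] at this
      exact this.of_append_left
    · have h := hay1
      unfold SimpleGraph.Walk.IsAlternating at h ⊢
      rw [hdecomp, Walk.edges_concat, List.concat_eq_append, List.Chain', List.isChain_append] at h
      exact h.1
    · have h3 : py1.length = q'.length + 1 := by rw [hdecomp, Walk.length_concat]
      rcases hOy with ⟨k, hk⟩
      exact ⟨k, by omega⟩

lemma key2 : ∀ a b r : Fin 2, a ≠ b → (a = r ↔ ¬ (b = r)) := by decide

lemma aux {V : Type*} {G : SimpleGraph V} (c : G.Coloring (Fin 2)) {M : G.Subgraph}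
    (hM : M.IsMatching) :
    ∀ (n : ℕ) (x y x₀ y₀ : V), G.Adj x y → x₀ ∉ M.verts → y₀ ∉ M.verts → c x₀ ≠ c y₀ →
    ∀ (px : G.Walk x₀ x) (py : G.Walk y₀ y), px.length + py.length ≤ n →
    px.IsPath → py.IsPath → px.IsAlternating M → py.IsAlternating M →
    Even px.length → Even py.length →
    ∃ (u w : V) (q : G.Walk u w), u ≠ w ∧ u ∉ M.verts ∧ w ∉ M.verts ∧
      q.IsPath ∧ q.IsAlternating M := by
  classical
  intro n
  induction n with
  | zero =>
    intro x y x₀ y₀ hxy hx₀ hy₀ hcne px py hlen hpx hpy hax hay hex hey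
    by_cases hint : ∃ z, z ∈ px.support ∧ z ∈ py.support
    · exfalso
      obtain ⟨z, hzx, hzy⟩ := hint
      have h1 : (px.takeUntil z hzx).length ≤ px.length := px.length_takeUntil_le hzx
      have h2 : (py.takeUntil z hzy).length ≤ py.length := py.length_takeUntil_le hzy
      have hx0 : (px.takeUntil z hzx).length = 0 := by omega
      have hy0 : (py.takeUntil z hzy).length = 0 := by omega
      have hcx : c x₀ = c z := (colorParity c _).mpr (by rw [hx0]; exact Even.zero)
      have hcy : c y₀ = c z := (colorParity c _).mpr (by rw [hy0]; exact Even.zero)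
      exact hcne (hcx.trans hcy.symm)
    · push_neg at hint
      exact base_case hM hxy hx₀ hy₀ (fun h => hcne (h ▸ rfl)) px py hpx hpy hax hay
        (alt_last hax hx₀ hex) (alt_last hay hy₀ hey) (fun z h1 h2 => hint z h1 h2)
  | succ n ih =>
    intro x y x₀ y₀ hxy hx₀ hy₀ hcne px py hlen hpx hpy hax hay hex hey
    by_cases hint : ∃ z, z ∈ px.support ∧ z ∈ py.support
    · obtain ⟨z, hzx, hzy⟩ := hint
      have hcx : c x₀ = c z ↔ Even (px.takeUntil z hzx).length := colorParity c _
      have hcy : c y₀ = c z ↔ Even (py.takeUntil z hzy).length := colorParity c _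
      have hiff : (c x₀ = c z) ↔ ¬ (c y₀ = c z) := key2 _ _ _ hcne
      rcases Nat.even_or_odd (px.takeUntil z hzx).length with hEx | hOx
      · have hOy : Odd (py.takeUntil z hzy).length := by
          rw [← Nat.not_even_iff_odd]
          intro hEy
          exact (hiff.mp (hcx.mpr hEx)) (hcy.mpr hEy)
        obtain ⟨x', y', hxy', px', py', hlen', hpx', hpy', hax', hay', hex', hey'⟩ :=
          step px py hpx hpy hax hay hzx hzy hEx hOy
        exact ih x' y' x₀ y₀ hxy' hx₀ hy₀ hcne px' py' (by omega) hpx' hpy' hax' hay' hex' hey'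
      · have hEy : Even (py.takeUntil z hzy).length := by
          by_contra hc2
          exact (Nat.not_even_iff_odd.mpr hOx) (hcx.mp (hiff.mpr (fun h => hc2 (hcy.mp h))))
        obtain ⟨x', y', hxy', px', py', hlen', hpx', hpy', hax', hay', hex', hey'⟩ :=
          step py px hpy hpx hay hax hzy hzx hEy hOx
        exact ih x' y' y₀ x₀ hxy' hy₀ hx₀ (fun h => hcne h.symm) px' py' (by omega)
          hpx' hpy' hax' hay' hex' hey'
    · push_neg at hint
      exact base_case hM hxy hx₀ hy₀ (fun h => hcne (h ▸ rfl)) px py hpx hpy hax hay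
        (alt_last hax hx₀ hex) (alt_last hay hy₀ hey) (fun z h1 h2 => hint z h1 h2)

/-- In a bipartite graph with a matching `M`, if `x` and `y` are adjacent and
there are simple alternating paths of even length ending in matched edges from
unmatched vertices `x₀` to `x` and `y₀` to `y`, then `x₀ ≠ y₀` and there is an
augmenting chain: a simple alternating path between two distinct unmatched
vertices. -/
theorem augmenting_chain_exists
    {V : Type*} (G : SimpleGraph V) (hbip : G.Colorable 2)
    (M : G.Subgraph) (hM : M.IsMatching)
    (x y x₀ y₀ : V) (hxy : G.Adj x y)
    (hx₀ : x₀ ∉ M.verts) (hy₀ : y₀ ∉ M.verts)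
    (px : G.Walk x₀ x) (py : G.Walk y₀ y)
    (hpx : px.IsPath) (hpy : py.IsPath)
    (hax : px.IsAlternating M) (hay : py.IsAlternating M)
    (hex : Even px.length) (hey : Even py.length)
    (hlastx : ∀ e ∈ px.edges.getLast?, e ∈ M.edgeSet)
    (hlasty : ∀ e ∈ py.edges.getLast?, e ∈ M.edgeSet) :
    x₀ ≠ y₀ ∧ ∃ (u w : V) (q : G.Walk u w), u ≠ w ∧ u ∉ M.verts ∧
      w ∉ M.verts ∧ q.IsPath ∧ q.IsAlternating M := by
  obtain ⟨c⟩ := hbip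
  have h1 : c x₀ = c x := (colorParity c px).mpr hex
  have h2 : c y₀ = c y := (colorParity c py).mpr hey
  have hcne : c x₀ ≠ c y₀ := by rw [h1, h2]; exact c.valid hxy
  exact ⟨fun h => hcne (h ▸ rfl),
    aux c hM (px.length + py.length) x y x₀ y₀ hxy hx₀ hy₀ hcne px py le_rfl
      hpx hpy hax hay hex hey⟩
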